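/- Let (X, d) be a metric space and let G : [0,t] × [0,t] → ℝ be such that for all r, the map s ↦ G(r,s) is Lipschitz on [0,t] with Lipschitz constant L₁ independent of r, and for all s, the map r ↦ G(r,s) is Lipschitz on [0,t] with Lipschitz constant L₂ independent of s. Then the map s ↦ G(s,s) is Lipschitz on [0,t], and for L¹-a.e. s ∈ (0,t), d/ds G(s,s) ≤ limsup_{u↓0} (G(s, s+u) − G(s,s))/u + limsup_{u↓0} (G(s,s) − G(s−u, s))/u. -/

import Mathlib

open Real MeasureTheory Filter Set Topology

namespace Stmt10Aux

noncomputable def cl (t τ : ℝ) : ℝ := max 0 (min τ t)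

lemma cl_mem {t : ℝ} (ht : 0 ≤ t) (τ : ℝ) : cl t τ ∈ Icc (0:ℝ) t := by
  constructor
  · exact le_max_left _ _
  · simp only [cl, max_le_iff]
    exact ⟨ht, min_le_right _ _⟩

lemma cl_eq {t τ : ℝ} (h : τ ∈ Icc (0:ℝ) t) : cl t τ = τ := by
  simp only [cl, min_eq_left h.2, max_eq_right h.1]

lemma cl_lip (t a b : ℝ) : |cl t a - cl t b| ≤ |a - b| := by
  simp only [cl]
  rcases le_total a b with h | h <;> rcases le_total a t with h1 | h1 <;>
    rcases le_total b t with h2 | h2 <;>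
    simp [min_eq_left, min_eq_right, *] <;>
    rcases le_total a 0 with h3 | h3 <;> rcases le_total b 0 with h4 | h4 <;>
    rcases le_total t 0 with h5 | h5 <;>
    simp [max_eq_left, max_eq_right, abs_le, *] <;> constructor <;> linarith [abs_nonneg (a - b), le_abs_self (a-b), neg_abs_le (a-b)]

noncomputable def Gb (t : ℝ) (G : ℝ → ℝ → ℝ) (r s : ℝ) : ℝ := G (cl t r) (cl t s)
noncomputable def gb (t : ℝ) (G : ℝ → ℝ → ℝ) (τ : ℝ) : ℝ := Gb t G τ τ
noncomputable def aa (t : ℝ) (G : ℝ → ℝ → ℝ) (u τ : ℝ) : ℝ := (Gb t G τ (τ+u) - Gb t G τ τ)/u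
noncomputable def bb (t : ℝ) (G : ℝ → ℝ → ℝ) (u τ : ℝ) : ℝ := (Gb t G τ τ - Gb t G (τ-u) τ)/u
noncomputable def FF (t : ℝ) (G : ℝ → ℝ → ℝ) (u τ : ℝ) : ℝ := aa t G u τ + bb t G u τ
noncomputable def useq (m : ℕ) : ℝ := 1/(m+1)
noncomputable def dd (t : ℝ) (G : ℝ → ℝ → ℝ) (n : ℕ) (τ : ℝ) : ℝ :=
  ⨆ k : ℕ, FF t G (useq (n+k)) τ
noncomputable def Phi (t : ℝ) (G : ℝ → ℝ → ℝ) (τ : ℝ) : ℝ := ⨅ n : ℕ, dd t G n τ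

lemma useq_pos (m : ℕ) : 0 < useq m := by simp only [useq]; positivity

lemma useq_tendsto : Tendsto useq atTop (𝓝[>] (0:ℝ)) := by
  apply tendsto_nhdsWithin_of_tendsto_nhds_of_eventually_within
  · exact tendsto_one_div_add_atTop_nhds_zero_nat
  · exact Eventually.of_forall fun m => useq_pos m

section

variable {t : ℝ} {G : ℝ → ℝ → ℝ} {L₁ L₂ : NNReal}

variable (ht : 0 ≤ t)
  (h1 : ∀ r ∈ Set.Icc (0:ℝ) t, LipschitzOnWith L₁ (fun s => G r s) (Set.Icc (0:ℝ) t))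
  (h2 : ∀ s ∈ Set.Icc (0:ℝ) t, LipschitzOnWith L₂ (fun r => G r s) (Set.Icc (0:ℝ) t))

include ht h1 in
lemma hGb1 : ∀ r s s' : ℝ, |Gb t G r s - Gb t G r s'| ≤ L₁ * |s - s'| := by
  intro r s s'
  have := (h1 (cl t r) (cl_mem ht r)).dist_le_mul (cl t s) (cl_mem ht s)
    (cl t s') (cl_mem ht s')
  simp only [Real.dist_eq] at this
  exact this.trans (by
    have := cl_lip t s s'
    have : (L₁:ℝ) * |cl t s - cl t s'| ≤ L₁ * |s - s'| := by
      apply mul_le_mul_of_nonneg_left this L₁.coe_nonneg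
    exact this)

include ht h2 in
lemma hGb2 : ∀ r r' s : ℝ, |Gb t G r s - Gb t G r' s| ≤ L₂ * |r - r'| := by
  intro r r' s
  have := (h2 (cl t s) (cl_mem ht s)).dist_le_mul (cl t r) (cl_mem ht r)
    (cl t r') (cl_mem ht r')
  simp only [Real.dist_eq] at this
  exact this.trans (mul_le_mul_of_nonneg_left (cl_lip t r r') L₂.coe_nonneg)

include ht h1 h2 in
lemma hgb_lip : ∀ a b : ℝ, |gb t G a - gb t G b| ≤ ((L₁:ℝ) + L₂) * |a - b| := by
  intro a b
  have e1 := hGb1 ht h1 a a b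
  have e2 := hGb2 ht h2 a b b
  calc |gb t G a - gb t G b| ≤ |Gb t G a a - Gb t G a b| + |Gb t G a b - Gb t G b b| := by
        simpa [gb] using abs_sub_le (Gb t G a a) (Gb t G a b) (Gb t G b b)
    _ ≤ L₁ * |a - b| + L₂ * |a - b| := add_le_add e1 e2
    _ = ((L₁:ℝ) + L₂) * |a - b| := by ring

include ht h1 h2 in
lemma hGb_cont : Continuous (fun p : ℝ × ℝ => Gb t G p.1 p.2) := by
  have : LipschitzWith (L₁ + L₂) (fun p : ℝ × ℝ => Gb t G p.1 p.2) := by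
    apply LipschitzWith.of_dist_le_mul
    intro p q
    simp only [Real.dist_eq, Prod.dist_eq]
    calc |Gb t G p.1 p.2 - Gb t G q.1 q.2|
        ≤ |Gb t G p.1 p.2 - Gb t G q.1 p.2| + |Gb t G q.1 p.2 - Gb t G q.1 q.2| :=
          abs_sub_le _ _ _
      _ ≤ L₂ * |p.1 - q.1| + L₁ * |p.2 - q.2| := add_le_add (hGb2 ht h2 _ _ _) (hGb1 ht h1 _ _ _)
      _ ≤ L₂ * max (dist p.1 q.1) (dist p.2 q.2) + L₁ * max (dist p.1 q.1) (dist p.2 q.2) := by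
          apply add_le_add <;> apply mul_le_mul_of_nonneg_left _ (NNReal.coe_nonneg _) <;>
            simp [Real.dist_eq, le_max_left, le_max_right]
      _ = ((L₁ + L₂ : NNReal) : ℝ) * max (dist p.1 q.1) (dist p.2 q.2) := by push_cast; ring
  exact this.continuous

include ht h1 h2 in
lemma hgb_cont : Continuous (gb t G) :=
  (hGb_cont ht h1 h2).comp (continuous_id.prodMk continuous_id)

include ht h1 h2 in
lemma haa_cont (u : ℝ) : Continuous (aa t G u) := by
  apply Continuous.div_const
  apply Continuous.sub
  · exact (hGb_cont ht h1 h2).comp (continuous_id.prodMk (continuous_id.add continuous_const))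
  · exact hgb_cont ht h1 h2

include ht h1 h2 in
lemma hbb_cont (u : ℝ) : Continuous (bb t G u) := by
  apply Continuous.div_const
  apply Continuous.sub
  · exact hgb_cont ht h1 h2
  · exact (hGb_cont ht h1 h2).comp ((continuous_id.sub continuous_const).prodMk continuous_id)

include ht h1 h2 in
lemma hFF_cont (u : ℝ) : Continuous (FF t G u) :=
  (haa_cont ht h1 h2 u).add (hbb_cont ht h1 h2 u)

include ht h1 in
lemma haa_abs {u : ℝ} (hu : 0 < u) (τ : ℝ) : |aa t G u τ| ≤ L₁ := by
  have h := hGb1 ht h1 τ (τ+u) τ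
  have : |τ + u - τ| = u := by rw [add_sub_cancel_left, abs_of_pos hu]
  rw [this] at h
  rw [aa, abs_div, abs_of_pos hu, div_le_iff₀ hu]
  linarith

include ht h2 in
lemma hbb_abs {u : ℝ} (hu : 0 < u) (τ : ℝ) : |bb t G u τ| ≤ L₂ := by
  have h := hGb2 ht h2 τ (τ - u) τ
  have : |τ - (τ - u)| = u := by rw [abs_of_pos (by linarith)]; ring_nf
  rw [this] at h
  rw [bb, abs_div, abs_of_pos hu, div_le_iff₀ hu]
  linarith

include ht h1 h2 in
lemma hFF_abs {u : ℝ} (hu : 0 < u) (τ : ℝ) : |FF t G u τ| ≤ (L₁:ℝ) + L₂ :=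
  (abs_add_le _ _).trans (add_le_add (haa_abs ht h1 hu τ) (hbb_abs ht h2 hu τ))


-- abstract one-step integral estimate
lemma step1 (g b : ℝ → ℝ) (hg : Continuous g) (hb : Continuous b) (x y u : ℝ)
    (hu : 0 < u) (K C2 : ℝ) (hK : 0 ≤ K)
    (hglip : ∀ a b', |g a - g b'| ≤ K * |a - b'|)
    (hbabs : ∀ τ, |b τ| ≤ C2)
    (F : ℝ → ℝ)
    (hpt : ∀ τ, F τ = (g (τ+u) - g τ)/u + (b τ - b (τ+u))) :
    g y - g x - (2*K + 2*C2)*u ≤ ∫ τ in x..y, F τ := by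
  have hbi : ∀ p q : ℝ, IntervalIntegrable b volume p q := fun p q => hb.intervalIntegrable p q
  have hgi : ∀ p q : ℝ, IntervalIntegrable g volume p q := fun p q => hg.intervalIntegrable p q
  have hbshift : (∫ τ in x..y, b (τ+u)) = ∫ τ in (x+u)..(y+u), b τ :=
    intervalIntegral.integral_comp_add_right b u
  have hgshift : (∫ τ in x..y, g (τ+u)) = ∫ τ in (x+u)..(y+u), g τ :=
    intervalIntegral.integral_comp_add_right g u
  have hbadj1 : (∫ τ in x..(x+u), b τ) + (∫ τ in (x+u)..(y+u), b τ) = ∫ τ in x..(y+u), b τ :=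
    intervalIntegral.integral_add_adjacent_intervals (hbi _ _) (hbi _ _)
  have hbadj2 : (∫ τ in x..y, b τ) + (∫ τ in y..(y+u), b τ) = ∫ τ in x..(y+u), b τ :=
    intervalIntegral.integral_add_adjacent_intervals (hbi _ _) (hbi _ _)
  have hgadj1 : (∫ τ in x..(x+u), g τ) + (∫ τ in (x+u)..(y+u), g τ) = ∫ τ in x..(y+u), g τ :=
    intervalIntegral.integral_add_adjacent_intervals (hgi _ _) (hgi _ _)
  have hgadj2 : (∫ τ in x..y, g τ) + (∫ τ in y..(y+u), g τ) = ∫ τ in x..(y+u), g τ :=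
    intervalIntegral.integral_add_adjacent_intervals (hgi _ _) (hgi _ _)
  have hFdec : (∫ τ in x..y, F τ) =
      ((∫ τ in x..y, g (τ+u)) - ∫ τ in x..y, g τ)/u
        + ((∫ τ in x..y, b τ) - ∫ τ in x..y, b (τ+u)) := by
    have : (∫ τ in x..y, F τ) = ∫ τ in x..y, ((g (τ+u) - g τ)/u + (b τ - b (τ+u))) := by
      apply intervalIntegral.integral_congr
      intro τ _; exact hpt τ
    rw [this]
    rw [intervalIntegral.integral_add, intervalIntegral.integral_sub (hbi _ _),
      intervalIntegral.integral_div, intervalIntegral.integral_sub]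
    · exact (hg.comp (continuous_id.add continuous_const)).intervalIntegrable _ _
    · exact hgi _ _
    · exact (hb.comp (continuous_id.add continuous_const)).intervalIntegrable _ _
    · exact (((hg.comp (continuous_id.add continuous_const)).sub hg).div_const u).intervalIntegrable _ _
    · exact (hb.sub (hb.comp (continuous_id.add continuous_const))).intervalIntegrable _ _
  have hbt1 : |∫ τ in x..(x+u), b τ| ≤ C2 * u := by
    have := intervalIntegral.norm_integral_le_of_norm_le_const
      (C := C2) (f := b) (a := x) (b := x+u) (fun τ _ => by simpa using hbabs τ)
    simpa [abs_of_pos hu] using this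
  have hbt2 : |∫ τ in y..(y+u), b τ| ≤ C2 * u := by
    have := intervalIntegral.norm_integral_le_of_norm_le_const
      (C := C2) (f := b) (a := y) (b := y+u) (fun τ _ => by simpa using hbabs τ)
    simpa [abs_of_pos hu] using this
  have hgt1 : (∫ τ in x..(x+u), g τ) ≤ u * (g x + K*u) := by
    have hmono : ∀ τ ∈ Icc x (x+u), g τ ≤ g x + K*u := by
      intro τ hτ
      have habs : |τ - x| ≤ u := by
        rw [abs_of_nonneg (by linarith [hτ.1])]; linarith [hτ.2]
      have := (abs_le.1 ((hglip τ x).trans (mul_le_mul_of_nonneg_left habs hK))).2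
      linarith
    calc (∫ τ in x..(x+u), g τ) ≤ ∫ _ in x..(x+u), (g x + K*u) :=
          intervalIntegral.integral_mono_on (by linarith) (hgi _ _)
            (intervalIntegrable_const) hmono
      _ = u * (g x + K*u) := by rw [intervalIntegral.integral_const]; simp [smul_eq_mul]
  have hgt2 : u * (g y - K*u) ≤ ∫ τ in y..(y+u), g τ := by
    have hmono : ∀ τ ∈ Icc y (y+u), g y - K*u ≤ g τ := by
      intro τ hτ
      have habs : |τ - y| ≤ u := by
        rw [abs_of_nonneg (by linarith [hτ.1])]; linarith [hτ.2]
      have := (abs_le.1 ((hglip τ y).trans (mul_le_mul_of_nonneg_left habs hK))).1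
      linarith
    calc u * (g y - K*u) = ∫ _ in y..(y+u), (g y - K*u) := by
          rw [intervalIntegral.integral_const]; simp [smul_eq_mul]
      _ ≤ ∫ τ in y..(y+u), g τ :=
          intervalIntegral.integral_mono_on (by linarith) intervalIntegrable_const (hgi _ _) hmono
  rw [hFdec, hgshift, hbshift]
  have e1 : (∫ τ in (x+u)..(y+u), g τ) - (∫ τ in x..y, g τ)
      = (∫ τ in y..(y+u), g τ) - (∫ τ in x..(x+u), g τ) := by linarith
  have e2 : (∫ τ in x..y, b τ) - (∫ τ in (x+u)..(y+u), b τ)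
      = (∫ τ in x..(x+u), b τ) - (∫ τ in y..(y+u), b τ) := by linarith
  rw [e1, e2]
  have hnum : u * (g y - K*u) - u * (g x + K*u) ≤
      (∫ τ in y..(y+u), g τ) - (∫ τ in x..(x+u), g τ) := by linarith
  have hdiv : (g y - g x - 2*K*u) ≤ ((∫ τ in y..(y+u), g τ) - (∫ τ in x..(x+u), g τ))/u := by
    rw [le_div_iff₀ hu]
    nlinarith [hnum]
  have hb1 := (abs_le.1 hbt1).1
  have hb2 := (abs_le.1 hbt2).2
  linarith

include ht h1 h2 in
lemma hdd_meas (n : ℕ) : Measurable (dd t G n) :=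
  Measurable.iSup fun _ => (hFF_cont ht h1 h2 _).measurable

include ht h1 h2 in
lemma hdd_bdd (n : ℕ) (τ : ℝ) : BddAbove (range fun k : ℕ => FF t G (useq (n+k)) τ) :=
  ⟨(L₁:ℝ) + L₂, by rintro z ⟨k, rfl⟩; exact (abs_le.1 (hFF_abs ht h1 h2 (useq_pos _) τ)).2⟩

include ht h1 h2 in
lemma hdd_abs (n : ℕ) (τ : ℝ) : |dd t G n τ| ≤ (L₁:ℝ) + L₂ := by
  rw [abs_le]
  constructor
  · refine le_trans ?_ (le_ciSup (hdd_bdd ht h1 h2 n τ) 0)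
    exact (abs_le.1 (hFF_abs ht h1 h2 (useq_pos _) τ)).1
  · exact ciSup_le fun k => (abs_le.1 (hFF_abs ht h1 h2 (useq_pos _) τ)).2

include ht h1 h2 in
lemma hdd_anti (τ : ℝ) : Antitone fun n => dd t G n τ := by
  apply antitone_nat_of_succ_le
  intro n
  apply ciSup_le
  intro k
  have e : n + 1 + k = n + (k + 1) := by omega
  rw [e]
  exact le_ciSup (hdd_bdd ht h1 h2 n τ) (k+1)

include ht h1 h2 in
lemma hPhi_meas : Measurable (Phi t G) :=
  Measurable.iInf fun n => hdd_meas ht h1 h2 n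

include ht h1 h2 in
lemma hPhi_abs (τ : ℝ) : |Phi t G τ| ≤ (L₁:ℝ) + L₂ := by
  rw [abs_le]
  constructor
  · exact le_ciInf fun n => (abs_le.1 (hdd_abs ht h1 h2 n τ)).1
  · refine le_trans (ciInf_le ⟨-((L₁:ℝ)+L₂), ?_⟩ 0) (abs_le.1 (hdd_abs ht h1 h2 0 τ)).2
    rintro z ⟨n, rfl⟩
    exact (abs_le.1 (hdd_abs ht h1 h2 n τ)).1

include ht h1 h2 in
lemma hkey (x y : ℝ) (hxy : x ≤ y) :
    gb t G y - gb t G x ≤ ∫ τ in x..y, Phi t G τ := by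
  set K : ℝ := (L₁:ℝ) + L₂ with hKdef
  have hK : 0 ≤ K := by positivity
  have hstep : ∀ u : ℝ, 0 < u →
      gb t G y - gb t G x - (2*K + 2*(L₂:ℝ))*u ≤ ∫ τ in x..y, FF t G u τ := by
    intro u hu
    apply step1 (gb t G) (bb t G u) (hgb_cont ht h1 h2) (hbb_cont ht h1 h2 u) x y u hu K L₂ hK
      (hgb_lip ht h1 h2) (fun τ => hbb_abs ht h2 hu τ)
    intro τ
    simp only [FF, aa, bb, gb]
    rw [show τ + u - u = τ from by ring]
    ring
  have hddInt : ∀ n, IntervalIntegrable (dd t G n) volume x y := by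
    intro n
    rw [intervalIntegrable_iff_integrableOn_Ioc_of_le hxy]
    apply Integrable.mono' (g := fun _ => K) (integrableOn_const measure_Ioc_lt_top.ne)
      ((hdd_meas ht h1 h2 n).aestronglyMeasurable)
    exact ae_of_all _ fun τ => by rw [Real.norm_eq_abs]; exact hdd_abs ht h1 h2 n τ
  have hstep2 : ∀ n, gb t G y - gb t G x ≤ ∫ τ in x..y, dd t G n τ := by
    intro n
    have hk : ∀ k : ℕ, gb t G y - gb t G x - (2*K + 2*(L₂:ℝ)) * useq (n+k)
        ≤ ∫ τ in x..y, dd t G n τ := by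
      intro k
      refine (hstep _ (useq_pos _)).trans ?_
      apply intervalIntegral.integral_mono_on hxy
        ((hFF_cont ht h1 h2 _).intervalIntegrable _ _) (hddInt n)
      intro τ _
      exact le_ciSup (hdd_bdd ht h1 h2 n τ) k
    have h0 : Tendsto (fun k : ℕ => useq (n+k)) atTop (𝓝 0) := by
      have := (useq_tendsto.mono_right nhdsWithin_le_nhds).comp (tendsto_add_atTop_nat n)
      simpa [Function.comp_def, Nat.add_comm] using this
    have hlim : Tendsto (fun k : ℕ => gb t G y - gb t G x - (2*K + 2*(L₂:ℝ)) * useq (n+k))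
        atTop (𝓝 (gb t G y - gb t G x)) := by
      have hc : Tendsto (fun _ : ℕ => gb t G y - gb t G x) atTop (𝓝 (gb t G y - gb t G x)) :=
        tendsto_const_nhds
      have := hc.sub (h0.const_mul (2*K + 2*(L₂:ℝ)))
      simpa using this
    exact le_of_tendsto hlim (Eventually.of_forall hk)
  have hdom : Tendsto (fun n => ∫ τ in x..y, dd t G n τ) atTop
      (𝓝 (∫ τ in x..y, Phi t G τ)) := by
    simp only [intervalIntegral.integral_of_le hxy]
    apply tendsto_integral_of_dominated_convergence (fun _ => K)
    · intro n; exact (hdd_meas ht h1 h2 n).aestronglyMeasurable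
    · exact integrableOn_const measure_Ioc_lt_top.ne
    · intro n
      exact ae_of_all _ fun τ => by rw [Real.norm_eq_abs]; exact hdd_abs ht h1 h2 n τ
    · refine ae_of_all _ fun τ => ?_
      apply tendsto_atTop_ciInf (hdd_anti ht h1 h2 τ)
      exact ⟨-K, by rintro z ⟨n, rfl⟩; exact (abs_le.1 (hdd_abs ht h1 h2 n τ)).1⟩
  exact ge_of_tendsto hdom (Eventually.of_forall hstep2)

include ht h1 h2 in
lemma hPhi_le {s : ℝ} (hs : s ∈ Ioo (0:ℝ) t) :
    Phi t G s ≤ limsup (fun u : ℝ => (G s (s + u) - G s s) / u) (𝓝[>] (0:ℝ))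
      + limsup (fun u : ℝ => (G s s - G (s - u) s) / u) (𝓝[>] (0:ℝ)) := by
  have hsI : s ∈ Icc (0:ℝ) t := ⟨hs.1.le, hs.2.le⟩
  have hδ : 0 < min s (t - s) := lt_min hs.1 (by linarith [hs.2])
  have hev : ∀ᶠ u in 𝓝[>] (0:ℝ), u ∈ Ioo 0 (min s (t-s)) :=
    eventually_of_mem (Ioo_mem_nhdsGT hδ) (fun _ h => h)
  have hevA : (fun u : ℝ => aa t G u s) =ᶠ[𝓝[>] (0:ℝ)] (fun u => (G s (s+u) - G s s)/u) := by
    filter_upwards [hev] with u hu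
    have hm : s + u ∈ Icc (0:ℝ) t := by
      constructor
      · linarith [hs.1, hu.1.le]
      · have h2' := hu.2
        have h3' := min_le_right s (t-s)
        linarith
    simp only [aa, Gb, cl_eq hsI, cl_eq hm]
  have hevB : (fun u : ℝ => bb t G u s) =ᶠ[𝓝[>] (0:ℝ)] (fun u => (G s s - G (s-u) s)/u) := by
    filter_upwards [hev] with u hu
    have hm : s - u ∈ Icc (0:ℝ) t := by
      constructor
      · have h3' := min_le_left s (t-s)
        linarith [hu.2]
      · linarith [hu.1, hs.2]
    simp only [bb, Gb, cl_eq hsI, cl_eq hm]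
  set A := limsup (fun u : ℝ => (G s (s + u) - G s s) / u) (𝓝[>] (0:ℝ)) with hA
  set B := limsup (fun u : ℝ => (G s s - G (s - u) s) / u) (𝓝[>] (0:ℝ)) with hB
  have hAeq : limsup (fun u : ℝ => aa t G u s) (𝓝[>] (0:ℝ)) = A := limsup_congr hevA
  have hBeq : limsup (fun u : ℝ => bb t G u s) (𝓝[>] (0:ℝ)) = B := limsup_congr hevB
  have hbddA : IsBoundedUnder (· ≤ ·) (𝓝[>] (0:ℝ)) (fun u => aa t G u s) :=
    ⟨(L₁:ℝ), by
      rw [eventually_map]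
      exact eventually_of_mem self_mem_nhdsWithin fun u hu => (abs_le.1 (haa_abs ht h1 hu s)).2⟩
  have hbddB : IsBoundedUnder (· ≤ ·) (𝓝[>] (0:ℝ)) (fun u => bb t G u s) :=
    ⟨(L₂:ℝ), by
      rw [eventually_map]
      exact eventually_of_mem self_mem_nhdsWithin fun u hu => (abs_le.1 (hbb_abs ht h2 hu s)).2⟩
  apply le_of_forall_pos_le_add
  intro ε hε
  have hAe : ∀ᶠ u in 𝓝[>] (0:ℝ), aa t G u s < A + ε/2 := by
    apply eventually_lt_of_limsup_lt _ hbddA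
    rw [hAeq]; linarith
  have hBe : ∀ᶠ u in 𝓝[>] (0:ℝ), bb t G u s < B + ε/2 := by
    apply eventually_lt_of_limsup_lt _ hbddB
    rw [hBeq]; linarith
  have hFe : ∀ᶠ u in 𝓝[>] (0:ℝ), FF t G u s ≤ A + B + ε := by
    filter_upwards [hAe, hBe] with u ha' hb'
    simp only [FF]; linarith
  have hseq : ∀ᶠ m in atTop, FF t G (useq m) s ≤ A + B + ε := useq_tendsto.eventually hFe
  obtain ⟨n₀, hn₀⟩ := eventually_atTop.1 hseq
  have hdle : dd t G n₀ s ≤ A + B + ε :=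
    ciSup_le fun k => hn₀ (n₀+k) (Nat.le_add_right _ _)
  refine le_trans (ciInf_le ⟨-((L₁:ℝ)+L₂), ?_⟩ n₀) hdle
  rintro z ⟨n, rfl⟩
  exact (abs_le.1 (hdd_abs ht h1 h2 n s)).1

end

end Stmt10Aux

open Stmt10Aux in
theorem stmt_10 (t : ℝ) (ht : 0 < t) (G : ℝ → ℝ → ℝ) (L₁ L₂ : NNReal)
    (h1 : ∀ r ∈ Set.Icc (0:ℝ) t, LipschitzOnWith L₁ (fun s => G r s) (Set.Icc (0:ℝ) t))
    (h2 : ∀ s ∈ Set.Icc (0:ℝ) t, LipschitzOnWith L₂ (fun r => G r s) (Set.Icc (0:ℝ) t)) :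
    (∃ L : NNReal, LipschitzOnWith L (fun s => G s s) (Set.Icc (0:ℝ) t)) ∧
    ∀ᵐ s ∂(volume.restrict (Set.Ioo (0:ℝ) t)),
      deriv (fun u => G u u) s ≤
        limsup (fun u : ℝ => (G s (s + u) - G s s) / u) (nhdsWithin 0 (Set.Ioi 0)) +
        limsup (fun u : ℝ => (G s s - G (s - u) s) / u) (nhdsWithin 0 (Set.Ioi 0)) := by
  have ht0 : (0:ℝ) ≤ t := ht.le
  constructor
  · refine ⟨L₁ + L₂, LipschitzOnWith.of_dist_le_mul fun a ha b hb => ?_⟩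
    simp only [Real.dist_eq]
    calc |G a a - G b b| ≤ |G a a - G a b| + |G a b - G b b| := abs_sub_le _ _ _
      _ ≤ (L₁:ℝ)*|a-b| + (L₂:ℝ)*|a-b| := by
          apply add_le_add
          · simpa [Real.dist_eq] using (h1 a ha).dist_le_mul a ha b hb
          · simpa [Real.dist_eq] using (h2 b hb).dist_le_mul a ha b hb
      _ = ((L₁+L₂ : NNReal):ℝ)*|a-b| := by push_cast; ring
  · have hgbLip : LipschitzWith (L₁ + L₂) (gb t G) := by
      apply LipschitzWith.of_dist_le_mul
      intro a b
      simp only [Real.dist_eq]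
      calc |gb t G a - gb t G b| ≤ ((L₁:ℝ)+L₂) * |a - b| := hgb_lip ht0 h1 h2 a b
        _ = ((L₁+L₂ : NNReal):ℝ) * |a-b| := by push_cast; ring
    have hdiff : ∀ᵐ x : ℝ, DifferentiableAt ℝ (gb t G) x := hgbLip.ae_differentiableAt
    have hPhiLoc : LocallyIntegrable (Phi t G) volume := by
      rw [locallyIntegrable_iff]
      intro k hk
      apply Integrable.mono' (g := fun _ => (L₁:ℝ)+L₂)
        (integrableOn_const hk.measure_lt_top.ne)
        ((hPhi_meas ht0 h1 h2).aestronglyMeasurable)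
      exact ae_of_all _ fun τ => by rw [Real.norm_eq_abs]; exact hPhi_abs ht0 h1 h2 τ
    have hleb0 := IsUnifLocDoublingMeasure.ae_tendsto_average (μ := volume) hPhiLoc 1
    have hleb : ∀ᵐ x : ℝ, Filter.Tendsto (fun h : ℝ => ⨍ y in Metric.closedBall x h, Phi t G y)
        (𝓝[>] (0:ℝ)) (𝓝 (Phi t G x)) := by
      filter_upwards [hleb0] with x hx
      exact hx (fun _ => x) id tendsto_id
        (eventually_of_mem self_mem_nhdsWithin fun h hh =>
          Metric.mem_closedBall_self (by rw [one_mul]; exact le_of_lt hh))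
    filter_upwards [ae_restrict_of_ae hdiff, ae_restrict_of_ae hleb,
      ae_restrict_mem measurableSet_Ioo] with s hd hl hsmem
    have hevq : (fun u => G u u) =ᶠ[𝓝 s] gb t G := by
      filter_upwards [isOpen_Ioo.mem_nhds hsmem] with u hu
      simp only [gb, Gb, cl_eq ⟨hu.1.le, hu.2.le⟩]
    rw [hevq.deriv_eq]
    set d := deriv (gb t G) s with hdd'
    have hder : HasDerivAt (gb t G) d s := hd.hasDerivAt
    have hslope := hasDerivAt_iff_tendsto_slope.1 hder
    have hmapp : Filter.Tendsto (fun h : ℝ => s + h) (𝓝[>] (0:ℝ)) (𝓝[≠] s) := by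
      apply tendsto_nhdsWithin_of_tendsto_nhds_of_eventually_within
      · have hc : Filter.Tendsto (fun h : ℝ => s + h) (𝓝 0) (𝓝 s) := by
          simpa using (tendsto_const_nhds (x := s)).add (tendsto_id (x := 𝓝 (0:ℝ)))
        exact hc.mono_left nhdsWithin_le_nhds
      · refine eventually_of_mem self_mem_nhdsWithin fun h hh => ?_
        have hh' : (0:ℝ) < h := hh
        simp only [Set.mem_compl_iff, Set.mem_singleton_iff]
        intro hc
        nlinarith [hc]
    have hmapm : Filter.Tendsto (fun h : ℝ => s - h) (𝓝[>] (0:ℝ)) (𝓝[≠] s) := by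
      apply tendsto_nhdsWithin_of_tendsto_nhds_of_eventually_within
      · have hc : Filter.Tendsto (fun h : ℝ => s - h) (𝓝 0) (𝓝 s) := by
          simpa using (tendsto_const_nhds (x := s)).sub (tendsto_id (x := 𝓝 (0:ℝ)))
        exact hc.mono_left nhdsWithin_le_nhds
      · refine eventually_of_mem self_mem_nhdsWithin fun h hh => ?_
        have hh' : (0:ℝ) < h := hh
        simp only [Set.mem_compl_iff, Set.mem_singleton_iff]
        intro hc
        nlinarith [hc]
    have T1 : Filter.Tendsto (fun h : ℝ => (gb t G (s+h) - gb t G s)/h)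
        (𝓝[>] (0:ℝ)) (𝓝 d) := by
      have hcomp := hslope.comp hmapp
      apply hcomp.congr
      intro h
      simp only [Function.comp_apply, slope_def_field, add_sub_cancel_left]
    have T2 : Filter.Tendsto (fun h : ℝ => (gb t G s - gb t G (s-h))/h)
        (𝓝[>] (0:ℝ)) (𝓝 d) := by
      have hcomp := hslope.comp hmapm
      apply hcomp.congr
      intro h
      simp only [Function.comp_apply, slope_def_field]
      rw [show s - h - s = -h from by ring, div_neg, ← neg_div, neg_sub]
    have Tsym : Filter.Tendsto (fun h : ℝ => (gb t G (s+h) - gb t G (s-h))/(2*h))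
        (𝓝[>] (0:ℝ)) (𝓝 d) := by
      have hsum := (T1.add T2).div_const 2
      have : (d + d)/2 = d := by ring
      rw [this] at hsum
      apply hsum.congr'
      filter_upwards [self_mem_nhdsWithin] with h hh
      have hh' : (0:ℝ) < h := hh
      rw [← add_div, div_div, mul_comm h 2]
      congr 1
      ring
    have Tavg : Filter.Tendsto (fun h : ℝ => (2*h)⁻¹ * ∫ τ in (s-h)..(s+h), Phi t G τ)
        (𝓝[>] (0:ℝ)) (𝓝 (Phi t G s)) := by
      apply hl.congr'
      filter_upwards [self_mem_nhdsWithin] with h hh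
      have hh' : (0:ℝ) < h := hh
      rw [setAverage_eq, Real.volume_real_closedBall hh'.le, Real.closedBall_eq_Icc,
        integral_Icc_eq_integral_Ioc, ← intervalIntegral.integral_of_le (by linarith)]
      simp [smul_eq_mul]
    have hineq : ∀ᶠ h in 𝓝[>] (0:ℝ),
        (gb t G (s+h) - gb t G (s-h))/(2*h) ≤ (2*h)⁻¹ * ∫ τ in (s-h)..(s+h), Phi t G τ := by
      filter_upwards [self_mem_nhdsWithin] with h hh
      have hh' : (0:ℝ) < h := hh
      have hk := hkey ht0 h1 h2 (s-h) (s+h) (by linarith)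
      rw [← div_eq_inv_mul]
      exact (div_le_div_iff_of_pos_right (by linarith)).2 hk
    have hfin : d ≤ Phi t G s := le_of_tendsto_of_tendsto Tsym Tavg hineq
    exact hfin.trans (hPhi_le ht0 h1 h2 hsmem)
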